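/- Let Γ = (I, {a_ij}) be a connected graph: a finite nonempty set I with a symmetric matrix a : I × I → ℕ such that for all i, j ∈ I there exists n ≥ 1 with (A^n)_{ij} > 0, where A = (a_ij). Then there exists a nonzero complex number q with q^2 ≠ −1 such that the main equation for Γ and λ = −q − q^{-1} has a solution. -/

import Mathlib

open Matrix

lemma perron_exists {I : Type*} [Fintype I] [Nonempty I] [DecidableEq I]
    (a : I → I → ℕ) (hsymm : ∀ i j, a i j = a j i)
    (hconn : ∀ i j, ∃ n : ℕ, 1 ≤ n ∧ 0 < ((Matrix.of a) ^ n) i j) :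
    ∃ (μ : ℝ) (u : I → ℝ), 0 < μ ∧ (∀ i, 0 < u i) ∧
      (Matrix.of fun i j => (a i j : ℝ)) *ᵥ u = μ • u := by
  set A : Matrix I I ℝ := Matrix.of fun i j => (a i j : ℝ) with hAdef
  -- A is the cast of the ℕ-matrix
  have hcast : ∀ n : ℕ, A ^ n = ((Matrix.of a : Matrix I I ℕ) ^ n).map (Nat.cast : ℕ → ℝ) := by
    intro n
    have h0 : A = (Nat.castRingHom ℝ).mapMatrix (Matrix.of a : Matrix I I ℕ) := rfl
    rw [h0, ← map_pow]
    rfl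
  have hAentry : ∀ i j, A i j = (a i j : ℝ) := fun i j => rfl
  have hAnonneg : ∀ (n : ℕ) (i j : I), 0 ≤ (A ^ n) i j := by
    intro n i j
    rw [hcast n]
    exact Nat.cast_nonneg _
  have hA : A.IsHermitian := by
    ext i j
    simp only [conjTranspose_apply, hAdef, Matrix.of_apply, star_trivial]
    exact_mod_cast hsymm j i
  obtain ⟨i₀, -, hmax⟩ := Finset.exists_max_image Finset.univ hA.eigenvalues
    ⟨Classical.arbitrary I, Finset.mem_univ _⟩
  set μ := hA.eigenvalues i₀ with hμdef
  set v : I → ℝ := ⇑(hA.eigenvectorBasis i₀) with hvdef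
  have hAv : A *ᵥ v = μ • v := hA.mulVec_eigenvectorBasis i₀
  have hv1 : ∑ i, v i * v i = 1 := by
    have hnorm := (hA.eigenvectorBasis).orthonormal.1 i₀
    have h2 : inner (𝕜 := ℝ) (hA.eigenvectorBasis i₀) (hA.eigenvectorBasis i₀) = (1 : ℝ) := by
      rw [real_inner_self_eq_norm_sq, hnorm]; norm_num
    rw [PiLp.inner_apply] at h2
    simpa [hvdef, ← sq] using h2
  -- the PSD matrix μ•1 - A
  set M : Matrix I I ℝ := μ • (1 : Matrix I I ℝ) - A with hMdef
  have hMpsd : M.PosSemidef := by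
    have hspec := hA.spectral_theorem
    set U : Matrix I I ℝ := (hA.eigenvectorUnitary : Matrix I I ℝ) with hUdef
    have hU1 : U * star U = 1 := Matrix.mem_unitaryGroup_iff.mp hA.eigenvectorUnitary.2
    have hM : M = U * Matrix.diagonal (fun k => μ - hA.eigenvalues k) * star U := by
      have hdiag : Matrix.diagonal (fun k => μ - hA.eigenvalues k)
          = μ • (1 : Matrix I I ℝ) - Matrix.diagonal (RCLike.ofReal ∘ hA.eigenvalues) := by
        ext k l
        rcases eq_or_ne k l with rfl | h
        · simp [Matrix.one_apply_eq]
        · simp [Matrix.diagonal_apply_ne _ h, Matrix.one_apply_ne h]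
      simp only [Unitary.conjStarAlgAut_apply, ← hUdef] at hspec
      rw [hdiag, Matrix.mul_sub, Matrix.sub_mul, ← hspec, Matrix.mul_smul, Matrix.mul_one,
        Matrix.smul_mul, hU1, hMdef]
    have hstar : star U = Uᴴ := rfl
    rw [hM, hstar]
    exact (Matrix.posSemidef_diagonal_iff.mpr fun k =>
      sub_nonneg.mpr (hmax k (Finset.mem_univ k))).mul_mul_conjTranspose_same U
  -- the entrywise absolute value of v
  set u : I → ℝ := fun i => |v i| with hudef
  have hu0 : ∀ i, 0 ≤ u i := fun i => abs_nonneg _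
  have hu1 : ∑ i, u i * u i = 1 := by
    rw [← hv1]
    exact Finset.sum_congr rfl fun i _ => abs_mul_abs_self (v i)
  have hquad : ∀ x : I → ℝ, x ⬝ᵥ (A *ᵥ x) = ∑ i, ∑ j, A i j * (x i * x j) := by
    intro x
    simp only [dotProduct, mulVec, dotProduct, Finset.mul_sum]
    exact Finset.sum_congr rfl fun i _ => Finset.sum_congr rfl fun j _ => by ring
  have hA1 : ∀ i j, 0 ≤ A i j := fun i j => Nat.cast_nonneg _
  have hineq : v ⬝ᵥ (A *ᵥ v) ≤ u ⬝ᵥ (A *ᵥ u) := by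
    rw [hquad, hquad]
    refine Finset.sum_le_sum fun i _ => Finset.sum_le_sum fun j _ => ?_
    refine mul_le_mul_of_nonneg_left ?_ (hA1 i j)
    calc v i * v j ≤ |v i * v j| := le_abs_self _
    _ = u i * u j := abs_mul _ _
  have hvAv : v ⬝ᵥ (A *ᵥ v) = μ := by
    rw [hAv, dotProduct_smul, smul_eq_mul]
    have hvv : v ⬝ᵥ v = 1 := hv1
    rw [hvv, mul_one]
  have hMu0 : star u ⬝ᵥ (M *ᵥ u) = 0 := by
    have hstar : star u = u := by simp
    rw [hstar]
    have h1 : u ⬝ᵥ (M *ᵥ u) = μ - u ⬝ᵥ (A *ᵥ u) := by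
      rw [hMdef, Matrix.sub_mulVec, dotProduct_sub, Matrix.smul_mulVec,
        Matrix.one_mulVec, dotProduct_smul, smul_eq_mul]
      have huu : u ⬝ᵥ u = 1 := hu1
      rw [huu, mul_one]
    have h2 : 0 ≤ u ⬝ᵥ (M *ᵥ u) := by simpa using hMpsd.dotProduct_mulVec_nonneg u
    linarith [hineq, hvAv]
  have hAu : A *ᵥ u = μ • u := by
    have hMu : M *ᵥ u = 0 := (hMpsd.dotProduct_mulVec_zero_iff u).mp hMu0
    rw [hMdef, Matrix.sub_mulVec, Matrix.smul_mulVec, Matrix.one_mulVec,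
      sub_eq_zero] at hMu
    exact hMu.symm
  -- some entry of u is positive
  obtain ⟨i₁, hi₁⟩ : ∃ i, 0 < u i := by
    by_contra h
    push_neg at h
    have : ∀ i, u i = 0 := fun i => le_antisymm (h i) (hu0 i)
    rw [Finset.sum_congr rfl fun i _ => by rw [this i, mul_zero]] at hu1
    simp at hu1
  have hpow : ∀ n : ℕ, (A ^ n) *ᵥ u = (μ ^ n) • u := by
    intro n
    induction n with
    | zero => simp
    | succ n ih =>
      rw [pow_succ, ← Matrix.mulVec_mulVec, hAu, Matrix.mulVec_smul, ih, smul_smul, pow_succ,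
        mul_comm]
  have hentry : ∀ (n : ℕ) (i j : I), (A ^ n) i j * u j ≤ μ ^ n * u i := by
    intro n i j
    have h1 : ((A ^ n) *ᵥ u) i = μ ^ n * u i := by rw [hpow n]; rfl
    rw [← h1]
    exact Finset.single_le_sum (fun k _ => mul_nonneg (hAnonneg n i k) (hu0 k))
      (Finset.mem_univ j)
  have hApos : ∀ (n : ℕ) (i j : I), 0 < ((Matrix.of a) ^ n) i j → 0 < (A ^ n) i j := by
    intro n i j h
    rw [hcast n]
    simp only [Matrix.map_apply]
    exact_mod_cast h
  have hμnonneg : 0 ≤ μ := by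
    have h1 := hentry 1 i₁ i₁
    have h2 : 0 ≤ (A ^ 1) i₁ i₁ * u i₁ := mul_nonneg (hAnonneg 1 i₁ i₁) (hu0 i₁)
    simp only [pow_one] at h1 h2
    nlinarith [hi₁]
  have hμpos : 0 < μ := by
    rcases lt_or_eq_of_le hμnonneg with h | h
    · exact h
    · exfalso
      obtain ⟨n, hn1, hpos⟩ := hconn i₁ i₁
      have h1 := hentry n i₁ i₁
      have h2 : 0 < (A ^ n) i₁ i₁ * u i₁ := mul_pos (hApos n i₁ i₁ hpos) hi₁
      rw [← h, zero_pow (by omega), zero_mul] at h1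
      linarith
  refine ⟨μ, u, hμpos, fun j => ?_, hAu⟩
  obtain ⟨n, hn1, hpos⟩ := hconn j i₁
  have h1 := hentry n j i₁
  have h2 : 0 < (A ^ n) j i₁ * u i₁ := mul_pos (hApos n j i₁ hpos) hi₁
  nlinarith [pow_pos hμpos n]


/-- A solution of the main equation (3) for the graph `Γ = (I, a)` and parameter `λ`:
a collection of invertible complex `a i j × a j i` matrices `E i j` (invertibility is
witnessed by two-sided inverses `B i j`, so that `(B j i)ᵀ = ((E j i)ᵀ)⁻¹`) such that
for every `i ∈ I`, `∑_j Tr (E i j * ((E j i)ᵀ)⁻¹) = λ`. -/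
def MainEqSolvable {I : Type*} [Fintype I] (a : I → I → ℕ) (lam : ℂ) : Prop :=
  ∃ (E : ∀ i j : I, Matrix (Fin (a i j)) (Fin (a j i)) ℂ)
    (B : ∀ i j : I, Matrix (Fin (a j i)) (Fin (a i j)) ℂ),
    (∀ i j, E i j * B i j = 1 ∧ B i j * E i j = 1) ∧
    (∀ i, ∑ j, (E i j * (B j i)ᵀ).trace = lam)

/-- For any connected graph `Γ = (I, a)` (connected: some power of the
adjacency matrix has a positive `(i, j)` entry, for every pair `i, j`) there exists a
nonzero `q ∈ ℂ` with `q² ≠ -1` such that the main equation for `Γ` and `λ = -q - q⁻¹`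
has a solution. -/
theorem stmt_8 {I : Type*} [Fintype I] [Nonempty I] [DecidableEq I]
    (a : I → I → ℕ) (hsymm : ∀ i j, a i j = a j i)
    (hconn : ∀ i j, ∃ n : ℕ, 1 ≤ n ∧ 0 < ((Matrix.of a) ^ n) i j) :
    ∃ q : ℂ, q ≠ 0 ∧ q ^ 2 ≠ -1 ∧ MainEqSolvable a (-q - q⁻¹) := by
  obtain ⟨μ, u, hμ, hu, hAu⟩ := perron_exists a hsymm hconn
  set d : I → ℂ := fun i => (u i : ℂ) with hddef
  have hd : ∀ i, d i ≠ 0 := fun i => by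
    simp only [hddef, ne_eq, Complex.ofReal_eq_zero]
    exact (hu i).ne'
  have heig : ∀ i, ∑ j, (a i j : ℂ) * d j = (μ : ℂ) * d i := by
    intro i
    have h := congrFun hAu i
    simp only [mulVec, dotProduct, Matrix.of_apply, Pi.smul_apply, smul_eq_mul] at h
    simp only [hddef]
    exact_mod_cast congrArg (fun r : ℝ => (r : ℂ)) h
  -- choose q as a root of X² + μX + 1
  obtain ⟨q, hq⟩ := Complex.exists_root
    (f := Polynomial.C 1 * Polynomial.X ^ 2 + Polynomial.C (μ : ℂ) * Polynomial.X
      + Polynomial.C 1)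
    (by rw [Polynomial.degree_quadratic one_ne_zero]; norm_num)
  have hqeq : q ^ 2 + (μ : ℂ) * q + 1 = 0 := by
    simpa [Polynomial.IsRoot] using hq
  have hq0 : q ≠ 0 := by
    rintro rfl
    simp at hqeq
  have hμ0 : (μ : ℂ) ≠ 0 := by
    simp only [ne_eq, Complex.ofReal_eq_zero]
    exact hμ.ne'
  have hq2 : q ^ 2 ≠ -1 := by
    intro h
    rw [h] at hqeq
    have hmq : (μ : ℂ) * q = 0 := by linear_combination hqeq
    rcases mul_eq_zero.mp hmq with h' | h'
    · exact hμ0 h'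
    · exact hq0 h'
  have hlam : -q - q⁻¹ = (μ : ℂ) := by
    field_simp
    linear_combination -hqeq
  -- the solution matrices
  have hsol : MainEqSolvable a ((μ : ℂ)) := by
    set J : ∀ i j : I, Matrix (Fin (a i j)) (Fin (a j i)) ℂ :=
      fun i j => Matrix.of fun k l => if (k : ℕ) = (l : ℕ) then 1 else 0 with hJdef
    have hJJ : ∀ i j, J i j * J j i = 1 := by
      intro i j
      ext k l
      rw [Matrix.mul_apply]
      rw [Finset.sum_eq_single (finCongr (hsymm i j) k)]
      · simp [hJdef, Matrix.one_apply, Fin.ext_iff]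
      · intro m _ hm
        have hkm : (k : ℕ) ≠ (m : ℕ) := by
          intro hkm
          exact hm (by simp [Fin.ext_iff, ← hkm])
        simp [hJdef, hkm]
      · simp
    have hJT : ∀ i j, (J i j)ᵀ = J j i := by
      intro i j
      ext l k
      simp only [hJdef, Matrix.transpose_apply, Matrix.of_apply]
      simp [eq_comm]
    have htr : ∀ i j, (J i j * J j i).trace = (a i j : ℂ) := by
      intro i j
      rw [hJJ, Matrix.trace_one]
      simp
    refine ⟨fun i j => d j • J i j, fun i j => (d j)⁻¹ • J j i, fun i j => ?_, fun i => ?_⟩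
    · constructor
      · rw [Matrix.smul_mul, Matrix.mul_smul, smul_smul, mul_inv_cancel₀ (hd j), one_smul, hJJ]
      · rw [Matrix.smul_mul, Matrix.mul_smul, smul_smul, inv_mul_cancel₀ (hd j), one_smul]
        exact hJJ j i
    · have hterm : ∀ j, ((d j • J i j) * ((d i)⁻¹ • J i j)ᵀ).trace
          = (a i j : ℂ) * d j * (d i)⁻¹ := by
        intro j
        rw [Matrix.transpose_smul, hJT, Matrix.smul_mul, Matrix.mul_smul, smul_smul,
          Matrix.trace_smul, htr, smul_eq_mul]
        ring
      rw [Finset.sum_congr rfl fun j _ => hterm j, ← Finset.sum_mul, heig i,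
        mul_assoc, mul_inv_cancel₀ (hd i), mul_one]
  exact ⟨q, hq0, hq2, by rw [show (-q - q⁻¹ : ℂ) = (μ : ℂ) from hlam]; exact hsol⟩
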